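/- Let g : ZMod P → ℂ with ∑_b g(b) = 0, i.e., F_1[g](0) = 0. Then for any f : (ZMod P)^D → ℂ and r : ZMod P → ℂ, ∑_{a ∈ (ZMod P)^D} ∑_{v ∈ ZMod P} F_D[f](v·a) · conj(F_1[r](v)) · F_1[g](v) · exp(2πi v (a·x)/P) = (∑_v F_1[g](v) conj(F_1[r](v))) · ∑_{a' ∈ (ZMod P)^D} F_D[f](a') · exp(2πi (a'·x)/P) for every x ∈ (ZMod P)^D, where P is prime. -/
import Mathlib


open Complex Finset

noncomputable section

/-- The character `exp(-2πi c / P)` via the canonical representative. -/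
def ch {P : ℕ} (c : ZMod P) : ℂ :=
  Complex.exp (-2 * Real.pi * Complex.I * (c.val : ℂ) / (P : ℂ))

/-- The character `exp(2πi c / P)`. -/
def chI {P : ℕ} (c : ZMod P) : ℂ :=
  Complex.exp (2 * Real.pi * Complex.I * (c.val : ℂ) / (P : ℂ))

/-- Dot product in `ZMod P`. -/
def dotp {P D : ℕ} (a x : Fin D → ZMod P) : ZMod P := ∑ j, a j * x j

/-- `D`-dimensional discrete Fourier transform on `(ZMod P)^D`. -/
def Fd {P D : ℕ} [NeZero P] (f : (Fin D → ZMod P) → ℂ) (u : Fin D → ZMod P) : ℂ :=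
  (((P : ℝ) ^ (-(D : ℝ) / 2) : ℝ) : ℂ) * ∑ x : Fin D → ZMod P, f x * ch (dotp u x)

/-- 1-dimensional discrete Fourier transform on `ZMod P`. -/
def Fo {P : ℕ} [NeZero P] (h : ZMod P → ℂ) (v : ZMod P) : ℂ :=
  (((P : ℝ) ^ (-(1 : ℝ) / 2) : ℝ) : ℂ) * ∑ b : ZMod P, h b * ch (v * b)

/-- Inverse 1-dimensional discrete Fourier transform on `ZMod P`. -/
def FoInv {P : ℕ} [NeZero P] (H : ZMod P → ℂ) (b : ZMod P) : ℂ :=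
  (((P : ℝ) ^ (-(1 : ℝ) / 2) : ℝ) : ℂ) * ∑ v : ZMod P, H v * chI (v * b)

/-- Discrete ridgelet transform `R[f](a,b) = P^(-D/2) * ∑ f(x) r(a·x - b)`. -/
def Rt {P D : ℕ} [NeZero P] (f : (Fin D → ZMod P) → ℂ) (r : ZMod P → ℂ)
    (a : Fin D → ZMod P) (b : ZMod P) : ℂ :=
  (((P : ℝ) ^ (-(D : ℝ) / 2) : ℝ) : ℂ) * ∑ x : Fin D → ZMod P, f x * r (dotp a x - b)

/-- Discretized shallow neural network `S[w](x)`. -/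
def Snn {P D : ℕ} [NeZero P] (g : ZMod P → ℂ) (w : (Fin D → ZMod P) → ZMod P → ℂ)
    (x : Fin D → ZMod P) : ℂ :=
  (((P : ℝ) ^ (-(D : ℝ) / 2) : ℝ) : ℂ) *
    ∑ a : Fin D → ZMod P, ∑ b : ZMod P, w a b * g (dotp a x - b)

/-- Central computation in the proof of the exact representation theorem: the
double sum over (a, v) factors through the admissibility constant. -/
theorem central_factorization (P D : ℕ) [Fact (Nat.Prime P)]
    (g : ZMod P → ℂ) (hg : ∑ b : ZMod P, g b = 0)
    (f : (Fin D → ZMod P) → ℂ) (r : ZMod P → ℂ) (x : Fin D → ZMod P) :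
    ∑ a : Fin D → ZMod P, ∑ v : ZMod P,
        Fd f (fun j => v * a j) * (starRingEnd ℂ) (Fo r v) * Fo g v
          * chI (v * dotp a x)
      = (∑ v : ZMod P, Fo g v * (starRingEnd ℂ) (Fo r v)) *
          ∑ a' : Fin D → ZMod P, Fd f a' * chI (dotp a' x) := by
  rw [Finset.sum_comm, Finset.sum_mul]
  refine Finset.sum_congr rfl fun v _ => ?_
  by_cases hv : v = 0
  · subst hv
    have h0 : Fo g (0 : ZMod P) = 0 := by
      simp [Fo, ch, hg]
    simp [h0]
  · have key : ∀ a : Fin D → ZMod P, dotp (fun j => v * a j) x = v * dotp a x := by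
      intro a; simp [dotp, Finset.mul_sum, mul_assoc]
    have hbij : Function.Bijective (fun a : Fin D → ZMod P => fun j => v * a j) :=
      (Equiv.piCongrRight fun _ => Equiv.mulLeft₀ v hv).bijective
    calc ∑ a : Fin D → ZMod P, Fd f (fun j => v * a j) * (starRingEnd ℂ) (Fo r v) * Fo g v
            * chI (v * dotp a x)
        = ∑ a : Fin D → ZMod P, Fd f (fun j => v * a j) * (starRingEnd ℂ) (Fo r v) * Fo g v
            * chI (dotp (fun j => v * a j) x) := by
          refine Finset.sum_congr rfl fun a _ => ?_
          rw [key]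
      _ = ∑ a' : Fin D → ZMod P, Fd f a' * (starRingEnd ℂ) (Fo r v) * Fo g v
            * chI (dotp a' x) :=
          Fintype.sum_bijective _ hbij _ _ (fun a => rfl)
      _ = Fo g v * (starRingEnd ℂ) (Fo r v) * ∑ a' : Fin D → ZMod P, Fd f a' * chI (dotp a' x) := by
          rw [Finset.mul_sum]
          refine Finset.sum_congr rfl fun a' _ => ?_
          ring
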